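/- For every integer n ≡ 0 (mod 4) with n ≥ 8, there exists an n×n shiftable, cyclically (2,3)-diagonal, partially filled integer array B whose entries have pairwise distinct absolute values such that: (1) supp(B) = [1, 6n+3] \ {n+1, 3n+2, 5n+3}; (2) the elements in every row and every column of B sum to 0 in Z. -/

import Mathlib

/-- Number of filled cells in row `i` of the partially filled array `A`. -/
def rowFilled {m n : ℕ} (A : Fin m → Fin n → Option ℤ) (i : Fin m) : ℕ :=
  (Finset.univ.filter fun j => (A i j).isSome).card

/-- Number of filled cells in column `j` of the partially filled array `A`. -/
def colFilled {m n : ℕ} (A : Fin m → Fin n → Option ℤ) (j : Fin n) : ℕ :=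
  (Finset.univ.filter fun i => (A i j).isSome).card

/-- Sum of the entries of row `i` (empty cells count as `0`). -/
def rowSum {m n : ℕ} (A : Fin m → Fin n → Option ℤ) (i : Fin m) : ℤ :=
  ∑ j, (A i j).getD 0

/-- Sum of the entries of column `j` (empty cells count as `0`). -/
def colSum {m n : ℕ} (A : Fin m → Fin n → Option ℤ) (j : Fin n) : ℤ :=
  ∑ i, (A i j).getD 0

/-- `A` is a square integer relative Heffter array `H_t(n;k)`, written with
integer entries: each row and each column has exactly `k` filled cells, each
row and column sums to `0` in `ℤ`, every entry `x` satisfies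
`1 ≤ |x| ≤ ⌊(2nk+t)/2⌋` with `|x|` not a multiple of `(2nk+t)/t` (i.e. the
class of `x` avoids the subgroup `J` of order `t`), and for every admissible
absolute value exactly one cell contains it (up to sign), so that every class
of `ZMod (2nk+t) \ J` is represented exactly once up to sign. -/
def IsIntHeffter (n k t : ℕ) (A : Fin n → Fin n → Option ℤ) : Prop :=
  (∀ i, rowFilled A i = k) ∧
  (∀ j, colFilled A j = k) ∧
  (∀ i, rowSum A i = 0) ∧
  (∀ j, colSum A j = 0) ∧
  (∀ i j x, A i j = some x →
    1 ≤ x.natAbs ∧ x.natAbs ≤ (2 * n * k + t) / 2 ∧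
      ¬ ((2 * n * k + t) / t ∣ x.natAbs)) ∧
  (∀ x : ℕ, 1 ≤ x → x ≤ (2 * n * k + t) / 2 → ¬ ((2 * n * k + t) / t ∣ x) →
    ∃! p : Fin n × Fin n, A p.1 p.2 = some (x : ℤ) ∨ A p.1 p.2 = some (-(x : ℤ)))

/-- A square partially filled integer array is shiftable if every row and every
column contains as many positive entries as negative entries. -/
def Shiftable {n : ℕ} (A : Fin n → Fin n → Option ℤ) : Prop :=
  (∀ i : Fin n, (Finset.univ.filter fun j => 0 < (A i j).getD 0).card =
      (Finset.univ.filter fun j => (A i j).getD 0 < 0).card) ∧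
  (∀ j : Fin n, (Finset.univ.filter fun i => 0 < (A i j).getD 0).card =
      (Finset.univ.filter fun i => (A i j).getD 0 < 0).card)

/-- `A` is cyclically `k`-diagonal: its filled cells are exactly those of `k`
consecutive cyclic diagonals (cell `(r,c)` lies on diagonal `r - c (mod n)`). -/
def CycDiagonal {n : ℕ} (k : ℕ) (A : Fin n → Fin n → Option ℤ) : Prop :=
  ∃ d : ZMod n, ∀ r c : Fin n, (A r c).isSome ↔
    ∃ j : ℕ, j < k ∧ ((r : ℕ) : ZMod n) - ((c : ℕ) : ZMod n) = d + (j : ZMod n)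

/-- `A` (of size `N` with `s ∣ N`) is cyclically `(s,k)`-diagonal: it is obtained
from a cyclically `k`-diagonal `(N/s) × (N/s)` array by blowing up each cell into
an `s × s` block and then cyclically shifting the columns by some offset. -/
def CycSKDiagonal (s k : ℕ) {N : ℕ} (A : Fin N → Fin N → Option ℤ) : Prop :=
  s ∣ N ∧ ∃ (d : ZMod (N / s)) (off : ℕ), ∀ r c : Fin N, (A r c).isSome ↔
    ∃ j : ℕ, j < k ∧
      (((r : ℕ) / s : ℕ) : ZMod (N / s)) - (((((c : ℕ) + off) % N) / s : ℕ) : ZMod (N / s))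
        = d + (j : ZMod (N / s))

/-- The support of a partially filled integer array: the set of absolute values
of its entries. -/
def suppSet {m n : ℕ} (A : Fin m → Fin n → Option ℤ) : Set ℕ :=
  {a | ∃ i j x, A i j = some x ∧ x.natAbs = a}

/-- The entries of `A` have pairwise distinct absolute values. -/
def DistinctAbs {m n : ℕ} (A : Fin m → Fin n → Option ℤ) : Prop :=
  ∀ i j i' j' x y, A i j = some x → A i' j' = some y →
    x.natAbs = y.natAbs → (i, j) = (i', j')

/-- The skeleton of a partially filled array: the set of its filled positions. -/
def skel {m n : ℕ} (A : Fin m → Fin n → Option ℤ) : Set (Fin m × Fin n) :=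
  {p | (A p.1 p.2).isSome}


/-- odd value `2*(x % m)+1` as an integer -/
def Uu (m x : ℕ) : ℤ := 2 * ((x % m : ℕ) : ℤ) + 1
/-- even value `2*(x % m)+2` -/
def Vv (m x : ℕ) : ℤ := Uu m x + 1

/-- entry table: diag `k`, base row `i`, sub-row `p`, sub-col `q` -/
def ent (m i k p q : ℕ) : ℤ :=
  if i % 2 = 0 then
    match k, p, q with
    | 0,0,0 => (2*m+1) + Uu m i
    | 0,0,1 => -((2*m+1) + Vv m (i+m-1))
    | 0,1,0 => -((2*m+1) - Vv m (i+m-1))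
    | 0,1,1 => (2*m+1) - Uu m i
    | 1,0,0 => (6*m+2) - Uu m i
    | 1,0,1 => -((6*m+2) + Vv m (i+m-2))
    | 1,1,0 => -((6*m+2) - Vv m (i+m-2))
    | 1,1,1 => (6*m+2) + Uu m i
    | 2,0,0 => (10*m+3) + Vv m (i+m-1)
    | 2,0,1 => -((10*m+3) - Vv m (i+m-2))
    | 2,1,0 => -((10*m+3) + Vv m (i+m-2))
    | 2,1,1 => (10*m+3) - Vv m (i+m-1)
    | _,_,_ => 0
  else
    match k, p, q with
    | 0,0,0 => (2*m+1) + Uu m i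
    | 0,0,1 => -((2*m+1) - Vv m (i+m-1))
    | 0,1,0 => -((2*m+1) + Vv m (i+m-1))
    | 0,1,1 => (2*m+1) - Uu m i
    | 1,0,0 => (6*m+2) - Vv m i
    | 1,0,1 => -((6*m+2) - Uu m (i+m-2))
    | 1,1,0 => -((6*m+2) + Uu m (i+m-2))
    | 1,1,1 => (6*m+2) + Vv m i
    | 2,0,0 => (10*m+3) - Uu m (i+m-2)
    | 2,0,1 => -((10*m+3) + Uu m (i+m-1))
    | 2,1,0 => -((10*m+3) - Uu m (i+m-1))
    | 2,1,1 => (10*m+3) + Uu m (i+m-2)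
    | _,_,_ => 0

def Bfun (n m : ℕ) (r c : Fin n) : Option ℤ :=
  if ((r:ℕ)/2 + m - (c:ℕ)/2) % m < 3 then
    some (ent m ((r:ℕ)/2) (((r:ℕ)/2 + m - (c:ℕ)/2) % m) ((r:ℕ)%2) ((c:ℕ)%2))
  else none

lemma modsub {m : ℕ} (hm : 0 < m) {i o : ℕ} (hi : i < m) (ho : o ≤ m) :
    (i + m - o) % m = if o ≤ i then i - o else i + m - o := by
  split_ifs with h
  · have : i + m - o = m + (i - o) := by omega
    rw [this, Nat.add_mod_left, Nat.mod_eq_of_lt (by omega)]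
  · exact Nat.mod_eq_of_lt (by omega)

lemma Uu_mod (m a b : ℕ) : Uu m (a % m + b) = Uu m (a + b) := by
  simp [Uu, Nat.mod_add_mod]

lemma Uu_addm (m a : ℕ) : Uu m (a + m) = Uu m a := by
  simp [Uu, Nat.add_mod_right]

lemma Uu_bound {m : ℕ} (hm : 0 < m) (x : ℕ) : 1 ≤ Uu m x ∧ Uu m x ≤ 2*m - 1 := by
  have := Nat.mod_lt x hm
  simp only [Uu]
  omega


lemma modfacts {m i : ℕ} (hm : 4 ≤ m) (hi : i < m) :
    i % m = i ∧
    ((1 ≤ i ∧ (i+m-1) % m = i-1) ∨ (i = 0 ∧ (i+m-1) % m = m-1)) ∧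
    ((2 ≤ i ∧ (i+m-2) % m = i-2) ∨ (i < 2 ∧ (i+m-2) % m = i+m-2)) := by
  refine ⟨Nat.mod_eq_of_lt hi, ?_, ?_⟩
  · rcases le_or_gt 1 i with h|h
    · left; refine ⟨h, ?_⟩
      rw [modsub (by omega) hi (by omega), if_pos h]
    · right; refine ⟨by omega, ?_⟩
      rw [modsub (by omega) hi (by omega), if_neg (by omega)]; omega
  · rcases le_or_gt 2 i with h|h
    · left; refine ⟨h, ?_⟩
      rw [modsub (by omega) hi (by omega), if_pos h]
    · right; refine ⟨h, ?_⟩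
      rw [modsub (by omega) hi (by omega), if_neg (by omega)]


set_option maxHeartbeats 1000000 in
lemma ent_inj0 {m i1 p1 q1 i2 p2 q2 : ℕ} (hm : 4 ≤ m) (hm2 : m % 2 = 0)
    (hi1 : i1 < m) (hp1 : p1 < 2) (hq1 : q1 < 2)
    (hi2 : i2 < m) (hp2 : p2 < 2) (hq2 : q2 < 2)
    (h : ent m i1 0 p1 q1 = ent m i2 0 p2 q2 ∨
         ent m i1 0 p1 q1 = - ent m i2 0 p2 q2) :
    i1 = i2 ∧ p1 = p2 ∧ q1 = q2 := by
  obtain ⟨M1, A1, B1⟩ := modfacts hm hi1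
  obtain ⟨M2, A2, B2⟩ := modfacts hm hi2
  have hp1' : p1 = 0 ∨ p1 = 1 := by omega
  have hq1' : q1 = 0 ∨ q1 = 1 := by omega
  have hp2' : p2 = 0 ∨ p2 = 1 := by omega
  have hq2' : q2 = 0 ∨ q2 = 1 := by omega
  rcases Nat.mod_two_eq_zero_or_one i1 with h1|h1 <;>
  rcases Nat.mod_two_eq_zero_or_one i2 with h2|h2 <;>
  rcases hp1' with rfl|rfl <;> rcases hq1' with rfl|rfl <;>
  rcases hp2' with rfl|rfl <;> rcases hq2' with rfl|rfl <;>
  simp only [ent, Uu, Vv, h1, h2, reduceIte] at h <;>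
  omega

set_option maxHeartbeats 1000000 in
lemma ent_inj1 {m i1 p1 q1 i2 p2 q2 : ℕ} (hm : 4 ≤ m) (hm2 : m % 2 = 0)
    (hi1 : i1 < m) (hp1 : p1 < 2) (hq1 : q1 < 2)
    (hi2 : i2 < m) (hp2 : p2 < 2) (hq2 : q2 < 2)
    (h : ent m i1 1 p1 q1 = ent m i2 1 p2 q2 ∨
         ent m i1 1 p1 q1 = - ent m i2 1 p2 q2) :
    i1 = i2 ∧ p1 = p2 ∧ q1 = q2 := by
  obtain ⟨M1, A1, B1⟩ := modfacts hm hi1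
  obtain ⟨M2, A2, B2⟩ := modfacts hm hi2
  have hp1' : p1 = 0 ∨ p1 = 1 := by omega
  have hq1' : q1 = 0 ∨ q1 = 1 := by omega
  have hp2' : p2 = 0 ∨ p2 = 1 := by omega
  have hq2' : q2 = 0 ∨ q2 = 1 := by omega
  rcases Nat.mod_two_eq_zero_or_one i1 with h1|h1 <;>
  rcases Nat.mod_two_eq_zero_or_one i2 with h2|h2 <;>
  rcases hp1' with rfl|rfl <;> rcases hq1' with rfl|rfl <;>
  rcases hp2' with rfl|rfl <;> rcases hq2' with rfl|rfl <;>
  simp only [ent, Uu, Vv, h1, h2, reduceIte] at h <;>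
  omega

set_option maxHeartbeats 1000000 in
lemma ent_inj2 {m i1 p1 q1 i2 p2 q2 : ℕ} (hm : 4 ≤ m) (hm2 : m % 2 = 0)
    (hi1 : i1 < m) (hp1 : p1 < 2) (hq1 : q1 < 2)
    (hi2 : i2 < m) (hp2 : p2 < 2) (hq2 : q2 < 2)
    (h : ent m i1 2 p1 q1 = ent m i2 2 p2 q2 ∨
         ent m i1 2 p1 q1 = - ent m i2 2 p2 q2) :
    i1 = i2 ∧ p1 = p2 ∧ q1 = q2 := by
  obtain ⟨M1, A1, B1⟩ := modfacts hm hi1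
  obtain ⟨M2, A2, B2⟩ := modfacts hm hi2
  have hp1' : p1 = 0 ∨ p1 = 1 := by omega
  have hq1' : q1 = 0 ∨ q1 = 1 := by omega
  have hp2' : p2 = 0 ∨ p2 = 1 := by omega
  have hq2' : q2 = 0 ∨ q2 = 1 := by omega
  rcases Nat.mod_two_eq_zero_or_one i1 with h1|h1 <;>
  rcases Nat.mod_two_eq_zero_or_one i2 with h2|h2 <;>
  rcases hp1' with rfl|rfl <;> rcases hq1' with rfl|rfl <;>
  rcases hp2' with rfl|rfl <;> rcases hq2' with rfl|rfl <;>
  simp only [ent, Uu, Vv, h1, h2, reduceIte] at h <;>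
  omega


set_option maxHeartbeats 1000000 in
lemma ent_band {m i k p q : ℕ} (hm : 4 ≤ m)
    (hi : i < m) (hk : k < 3) (hp : p < 2) (hq : q < 2) :
    (4*m+1)*k + 1 ≤ (ent m i k p q).natAbs ∧
    (ent m i k p q).natAbs ≤ (4*m+1)*(k+1) ∧
    (ent m i k p q).natAbs ≠ (4*m+1)*k + 2*m+1 := by
  have U1 := Uu_bound (by omega : 0 < m) i
  have U2 := Uu_bound (by omega : 0 < m) (i+m-1)
  have U3 := Uu_bound (by omega : 0 < m) (i+m-2)
  have hk' : k = 0 ∨ k = 1 ∨ k = 2 := by omega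
  have hp' : p = 0 ∨ p = 1 := by omega
  have hq' : q = 0 ∨ q = 1 := by omega
  rcases Nat.mod_two_eq_zero_or_one i with h1|h1 <;>
  rcases hk' with rfl|rfl|rfl <;> rcases hp' with rfl|rfl <;> rcases hq' with rfl|rfl <;>
  simp only [ent, Vv, h1, reduceIte] <;>
  omega

lemma ent_inj {m i1 k1 p1 q1 i2 k2 p2 q2 : ℕ} (hm : 4 ≤ m) (hm2 : m % 2 = 0)
    (hi1 : i1 < m) (hk1 : k1 < 3) (hp1 : p1 < 2) (hq1 : q1 < 2)
    (hi2 : i2 < m) (hk2 : k2 < 3) (hp2 : p2 < 2) (hq2 : q2 < 2)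
    (h : ent m i1 k1 p1 q1 = ent m i2 k2 p2 q2 ∨
         ent m i1 k1 p1 q1 = - ent m i2 k2 p2 q2) :
    i1 = i2 ∧ k1 = k2 ∧ p1 = p2 ∧ q1 = q2 := by
  have habs : (ent m i1 k1 p1 q1).natAbs = (ent m i2 k2 p2 q2).natAbs := by
    rcases h with h|h <;> rw [h] <;> simp [Int.natAbs_neg]
  have b1 := ent_band (i := i1) (k := k1) (p := p1) (q := q1) hm hi1 hk1 hp1 hq1
  have b2 := ent_band (i := i2) (k := k2) (p := p2) (q := q2) hm hi2 hk2 hp2 hq2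
  have hkk : k1 = k2 := by
    have e1 : k1 = 0 ∨ k1 = 1 ∨ k1 = 2 := by omega
    have e2 : k2 = 0 ∨ k2 = 1 ∨ k2 = 2 := by omega
    rcases e1 with rfl|rfl|rfl <;> rcases e2 with rfl|rfl|rfl <;> omega
  subst hkk
  have e1 : k1 = 0 ∨ k1 = 1 ∨ k1 = 2 := by omega
  rcases e1 with rfl|rfl|rfl
  · obtain ⟨a,b,c⟩ := ent_inj0 hm hm2 hi1 hp1 hq1 hi2 hp2 hq2 h; exact ⟨a,rfl,b,c⟩
  · obtain ⟨a,b,c⟩ := ent_inj1 hm hm2 hi1 hp1 hq1 hi2 hp2 hq2 h; exact ⟨a,rfl,b,c⟩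
  · obtain ⟨a,b,c⟩ := ent_inj2 hm hm2 hi1 hp1 hq1 hi2 hp2 hq2 h; exact ⟨a,rfl,b,c⟩

/-- getD-version of the array entry -/
def bent (m r c : ℕ) : ℤ :=
  if (r/2 + m - c/2) % m < 3 then ent m (r/2) ((r/2 + m - c/2) % m) (r%2) (c%2) else 0

lemma getD_B {n m : ℕ} (r c : Fin n) : (Bfun n m r c).getD 0 = bent m (r:ℕ) (c:ℕ) := by
  unfold Bfun bent
  split <;> simp

lemma sum_range_pair (f : ℕ → ℤ) (m : ℕ) :
    ∑ x ∈ Finset.range (2*m), f x = ∑ j ∈ Finset.range m, (f (2*j) + f (2*j+1)) := by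
  induction m with
  | zero => simp
  | succ m ih =>
      rw [show 2*(m+1) = (2*m+1)+1 by ring, Finset.sum_range_succ, Finset.sum_range_succ, ih,
        Finset.sum_range_succ, add_assoc]

lemma sig_inv {m : ℕ} (hm : 0 < m) {x j : ℕ} (hx : x < m) (hj : j < m) :
    (x + m - ((x + m - j) % m)) % m = j := by
  have hin := modsub hm hx (show j ≤ m by omega)
  rcases le_or_gt j x with h|h
  · rw [if_pos h] at hin
    rw [hin, modsub hm hx (show x - j ≤ m by omega), if_pos (by omega)]
    omega
  · rw [if_neg (by omega)] at hin
    rw [hin, modsub hm hx (show x + m - j ≤ m by omega), if_neg (by omega)]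
    omega

lemma sum_reindex {m : ℕ} (hm : 0 < m) {x : ℕ} (hx : x < m) (H : ℕ → ℤ) :
    ∑ j ∈ Finset.range m, H ((x + m - j) % m) = ∑ j ∈ Finset.range m, H j := by
  apply Finset.sum_nbij' (i := fun j => (x + m - j) % m) (j := fun j => (x + m - j) % m)
  · intro a ha
    exact Finset.mem_range.2 (Nat.mod_lt _ hm)
  · intro a ha
    exact Finset.mem_range.2 (Nat.mod_lt _ hm)
  · intro a ha
    exact sig_inv hm hx (Finset.mem_range.1 ha)
  · intro a ha
    exact sig_inv hm hx (Finset.mem_range.1 ha)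
  · intro a ha
    rfl

lemma sum_shift {m : ℕ} (hm : 0 < m) {x : ℕ} (hx : x < m) (H : ℕ → ℤ) :
    ∑ j ∈ Finset.range m, H j = ∑ j ∈ Finset.range m, H ((x + j) % m) := by
  apply Finset.sum_nbij' (i := fun i => (i + m - x) % m) (j := fun t => (x + t) % m)
  · intro a ha; exact Finset.mem_range.2 (Nat.mod_lt _ hm)
  · intro a ha; exact Finset.mem_range.2 (Nat.mod_lt _ hm)
  · intro a ha
    have ha' := Finset.mem_range.1 ha
    -- (x + (a + m - x) % m) % m = a
    rw [Nat.add_comm x _, Nat.mod_add_mod, show a + m - x + x = a + m by omega,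
      Nat.add_mod_right, Nat.mod_eq_of_lt ha']
  · intro a ha
    have ha' := Finset.mem_range.1 ha
    -- ((x + a) % m + m - x) % m = a
    rw [show (x + a) % m + m - x = (x + a) % m + (m - x) by omega, Nat.mod_add_mod,
      show x + a + (m - x) = a + m by omega, Nat.add_mod_right, Nat.mod_eq_of_lt ha']
  · intro a ha
    have ha' := Finset.mem_range.1 ha
    have e : (x + ((a + m - x) % m)) % m = a := by
      rw [Nat.add_comm x _, Nat.mod_add_mod, show a + m - x + x = a + m by omega,
        Nat.add_mod_right, Nat.mod_eq_of_lt ha']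
    rw [e]

lemma sum_three {m : ℕ} (hm : 3 ≤ m) (H : ℕ → ℤ) (h0 : ∀ x, 3 ≤ x → x < m → H x = 0) :
    ∑ j ∈ Finset.range m, H j = H 0 + H 1 + H 2 := by
  rw [← Finset.sum_subset (Finset.range_subset_range.2 hm)
    (fun x hx' hx => h0 x (by simpa using Finset.mem_range.not.1 hx) (Finset.mem_range.1 hx'))]
  simp [Finset.sum_range_succ]

lemma Uumm {m x : ℕ} : Uu m (x % m) = Uu m x := by
  simp [Uu, Nat.mod_mod_of_dvd _ dvd_rfl]

lemma tau {m : ℕ} (hm : 0 < m) {j t : ℕ} (hj : j < m) (ht : t < m) :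
    ((j + t) % m + m - j) % m = t := by
  rw [show (j + t) % m + m - j = (j + t) % m + (m - j) by omega, Nat.mod_add_mod,
    show j + t + (m - j) = t + m by omega, Nat.add_mod_right, Nat.mod_eq_of_lt ht]

lemma row_zero {m : ℕ} (hm4 : 4 ≤ m) (hm2 : m % 2 = 0) {r : ℕ} (hr : r < 2*m) :
    ∑ c ∈ Finset.range (2*m), bent m r c = 0 := by
  have hm : 0 < m := by omega
  have hi : r / 2 < m := by omega
  rw [sum_range_pair]
  have key : ∀ j, bent m r (2*j) + bent m r (2*j+1) =
      (fun w => if w < 3 then ent m (r/2) w (r%2) 0 + ent m (r/2) w (r%2) 1 else 0)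
        ((r/2 + m - j) % m) := by
    intro j
    simp only [bent]
    rw [show (2*j)/2 = j by omega, show (2*j)%2 = 0 by omega,
      show (2*j+1)/2 = j by omega, show (2*j+1)%2 = 1 by omega]
    split <;> simp
  simp only [key]
  rw [sum_reindex hm hi (fun w => if w < 3 then ent m (r/2) w (r%2) 0 + ent m (r/2) w (r%2) 1 else 0),
    sum_three (by omega) (fun w => if w < 3 then ent m (r/2) w (r%2) 0 + ent m (r/2) w (r%2) 1 else 0)
      (fun x h3 _ => by simp [Nat.not_lt.2 h3])]
  norm_num
  rcases Nat.mod_two_eq_zero_or_one (r/2) with h1|h1 <;>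
  rcases Nat.mod_two_eq_zero_or_one r with h2|h2 <;>
  simp only [ent, Vv, Uu, h1, h2, reduceIte] <;>
  omega

lemma col_zero {m : ℕ} (hm4 : 4 ≤ m) (hm2 : m % 2 = 0) {c : ℕ} (hc : c < 2*m) :
    ∑ r ∈ Finset.range (2*m), bent m r c = 0 := by
  have hm : 0 < m := by omega
  have hj : c / 2 < m := by omega
  have hdvd : 2 ∣ m := Nat.dvd_of_mod_eq_zero hm2
  set j := c / 2 with hjdef
  rw [sum_range_pair]
  have key : ∀ i, bent m (2*i) c + bent m (2*i+1) c =
      (fun i' => if (i' + m - j) % m < 3 then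
          ent m i' ((i' + m - j) % m) 0 (c%2) + ent m i' ((i' + m - j) % m) 1 (c%2)
        else 0) i := by
    intro i
    simp only [bent]
    rw [show (2*i)/2 = i by omega, show (2*i)%2 = 0 by omega,
      show (2*i+1)/2 = i by omega, show (2*i+1)%2 = 1 by omega]
    split <;> simp_all
  simp only [key]
  rw [sum_shift hm hj (fun i' => if (i' + m - j) % m < 3 then
      ent m i' ((i' + m - j) % m) 0 (c%2) + ent m i' ((i' + m - j) % m) 1 (c%2) else 0)]
  rw [sum_three (by omega) (fun t => if ((j + t) % m + m - j) % m < 3 then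
      ent m ((j + t) % m) (((j + t) % m + m - j) % m) 0 (c%2) +
      ent m ((j + t) % m) (((j + t) % m + m - j) % m) 1 (c%2) else 0)
    (fun x h3 hx => by
      simp only [tau hm hj hx]
      simp [Nat.not_lt.2 h3])]
  simp only [tau hm hj (show (0:ℕ) < m by omega), tau hm hj (show 1 < m by omega),
    tau hm hj (show 2 < m by omega)]
  norm_num
  have MJ : j % m = j := Nat.mod_eq_of_lt hj
  rw [MJ]
  have C1 : ((j+1)%m + m - 2) % m = (j + m - 1) % m := by
    rw [show (j+1)%m + m - 2 = (j+1)%m + (m-2) by omega, Nat.mod_add_mod]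
    congr 1
    omega
  have C2 : ((j+2)%m + m - 2) % m = j % m := by
    rw [show (j+2)%m + m - 2 = (j+2)%m + (m-2) by omega, Nat.mod_add_mod,
      show j + 2 + (m-2) = j + m by omega, Nat.add_mod_right]
  have C3 : ((j+2)%m + m - 1) % m = (j+1) % m := by
    rw [show (j+2)%m + m - 1 = (j+2)%m + (m-1) by omega, Nat.mod_add_mod,
      show j + 2 + (m-1) = (j+1) + m by omega, Nat.add_mod_right]
  have C4 : ((j+1)%m + m - 1) % m = j % m := by
    rw [show (j+1)%m + m - 1 = (j+1)%m + (m-1) by omega, Nat.mod_add_mod,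
      show j + 1 + (m-1) = j + m by omega, Nat.add_mod_right]
  have P1 : ((j+1)%m) % 2 = (j+1) % 2 := Nat.mod_mod_of_dvd _ hdvd
  have P2 : ((j+2)%m) % 2 = (j+2) % 2 := Nat.mod_mod_of_dvd _ hdvd
  have D1 : ((j+1)%m) % m = (j+1) % m := Nat.mod_mod_of_dvd _ dvd_rfl
  have D2 : ((j+2)%m) % m = (j+2) % m := Nat.mod_mod_of_dvd _ dvd_rfl
  have D3 : (j+1) % m < m := Nat.mod_lt _ hm
  have D4 : (j+2) % m < m := Nat.mod_lt _ hm
  have D5 : (j+m-1) % m < m := Nat.mod_lt _ hm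
  rcases Nat.mod_two_eq_zero_or_one j with h1|h1 <;>
  rcases Nat.mod_two_eq_zero_or_one c with h2|h2 <;>
  simp only [ent, Vv, Uumm, h1, h2, C1, C2, C3, C4, P1, P2,
    show (j+1)%2 = (1 - j%2) by omega, show (j+2)%2 = j%2 by omega, reduceIte] <;>
  simp only [Uu] <;>
  omega

set_option maxHeartbeats 1000000 in
lemma ent_sign {m i k p q : ℕ} (hm : 4 ≤ m) (hi : i < m) (hk : k < 3) (hp : p < 2) (hq : q < 2) :
    (p = q → 0 < ent m i k p q) ∧ (p ≠ q → ent m i k p q < 0) := by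
  have U1 := Uu_bound (show 0 < m by omega) i
  have U2 := Uu_bound (show 0 < m by omega) (i+m-1)
  have U3 := Uu_bound (show 0 < m by omega) (i+m-2)
  have hk' : k = 0 ∨ k = 1 ∨ k = 2 := by omega
  have hp' : p = 0 ∨ p = 1 := by omega
  have hq' : q = 0 ∨ q = 1 := by omega
  rcases Nat.mod_two_eq_zero_or_one i with h1|h1 <;>
  rcases hk' with rfl|rfl|rfl <;> rcases hp' with rfl|rfl <;> rcases hq' with rfl|rfl <;>
  simp only [ent, Vv, h1, reduceIte] <;>
  omega

lemma bent_sign {m r c : ℕ} (hm4 : 4 ≤ m) (hr : r < 2*m) (hc : c < 2*m) :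
    (0 < bent m r c ↔ ((r/2 + m - c/2) % m < 3 ∧ r % 2 = c % 2)) ∧
    (bent m r c < 0 ↔ ((r/2 + m - c/2) % m < 3 ∧ r % 2 ≠ c % 2)) := by
  unfold bent
  split_ifs with h
  · obtain ⟨s1, s2⟩ := ent_sign (i := r/2) (k := (r/2 + m - c/2) % m) (p := r%2) (q := c%2)
      hm4 (by omega) h (by omega) (by omega)
    rcases eq_or_ne (r%2) (c%2) with he|he
    · have h0 := s1 he
      exact ⟨⟨fun _ => ⟨h, he⟩, fun _ => h0⟩,
             ⟨fun hh => by omega, fun hh => absurd he hh.2⟩⟩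
    · have h0 := s2 he
      exact ⟨⟨fun hh => by omega, fun hh => absurd hh.2 he⟩,
             ⟨fun _ => ⟨h, he⟩, fun _ => h0⟩⟩
  · constructor <;> constructor <;> intro hh
    · omega
    · exact absurd hh.1 h
    · omega
    · exact absurd hh.1 h

def flip1 (m : ℕ) (c : Fin (2*m)) : Fin (2*m) :=
  ⟨2*((c:ℕ)/2) + (1 - (c:ℕ)%2), by have := c.isLt; omega⟩

lemma flip1_val (m : ℕ) (c : Fin (2*m)) : ((flip1 m c : Fin (2*m)) : ℕ) = 2*((c:ℕ)/2) + (1 - (c:ℕ)%2) := rfl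

lemma row_shift {m : ℕ} (hm4 : 4 ≤ m) (r : Fin (2*m)) :
    (Finset.univ.filter fun c => 0 < (Bfun (2*m) m r c).getD 0).card =
    (Finset.univ.filter fun c => (Bfun (2*m) m r c).getD 0 < 0).card := by
  have hb : ∀ c : Fin (2*m), (c:ℕ) < 2*m := fun c => c.isLt
  apply Finset.card_nbij' (i := flip1 m) (j := flip1 m)
  · intro c hc
    simp only [Finset.mem_coe, Finset.mem_filter, Finset.mem_univ, true_and, getD_B] at hc ⊢
    have e1 : (2*((c:ℕ)/2) + (1 - (c:ℕ)%2)) / 2 = (c:ℕ)/2 := by omega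
    have e2 : (2*((c:ℕ)/2) + (1 - (c:ℕ)%2)) % 2 = 1 - (c:ℕ)%2 := by omega
    have h1 := (bent_sign hm4 r.isLt (hb c)).1.1 hc
    refine (bent_sign (c := 2*((c:ℕ)/2) + (1 - (c:ℕ)%2)) hm4 r.isLt (by have := c.isLt; omega)).2.2 ?_
    rw [e1, e2]
    exact ⟨h1.1, by omega⟩
  · intro c hc
    simp only [Finset.mem_coe, Finset.mem_filter, Finset.mem_univ, true_and, getD_B] at hc ⊢
    have e1 : (2*((c:ℕ)/2) + (1 - (c:ℕ)%2)) / 2 = (c:ℕ)/2 := by omega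
    have e2 : (2*((c:ℕ)/2) + (1 - (c:ℕ)%2)) % 2 = 1 - (c:ℕ)%2 := by omega
    have h1 := (bent_sign hm4 r.isLt (hb c)).2.1 hc
    refine (bent_sign (c := 2*((c:ℕ)/2) + (1 - (c:ℕ)%2)) hm4 r.isLt (by have := c.isLt; omega)).1.2 ?_
    rw [e1, e2]
    exact ⟨h1.1, by omega⟩
  · intro c hc
    apply Fin.ext
    simp only [flip1_val]
    have := c.isLt
    omega
  · intro c hc
    apply Fin.ext
    simp only [flip1_val]
    have := c.isLt
    omega

lemma col_shift {m : ℕ} (hm4 : 4 ≤ m) (c : Fin (2*m)) :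
    (Finset.univ.filter fun r => 0 < (Bfun (2*m) m r c).getD 0).card =
    (Finset.univ.filter fun r => (Bfun (2*m) m r c).getD 0 < 0).card := by
  apply Finset.card_nbij' (i := flip1 m) (j := flip1 m)
  · intro r hc
    simp only [Finset.mem_coe, Finset.mem_filter, Finset.mem_univ, true_and, getD_B] at hc ⊢
    have e1 : (2*((r:ℕ)/2) + (1 - (r:ℕ)%2)) / 2 = (r:ℕ)/2 := by omega
    have e2 : (2*((r:ℕ)/2) + (1 - (r:ℕ)%2)) % 2 = 1 - (r:ℕ)%2 := by omega
    have h1 := (bent_sign hm4 r.isLt c.isLt).1.1 hc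
    refine (bent_sign (r := 2*((r:ℕ)/2) + (1 - (r:ℕ)%2)) hm4 (by have := r.isLt; omega) c.isLt).2.2 ?_
    rw [e1, e2]
    exact ⟨h1.1, by omega⟩
  · intro r hc
    simp only [Finset.mem_coe, Finset.mem_filter, Finset.mem_univ, true_and, getD_B] at hc ⊢
    have e1 : (2*((r:ℕ)/2) + (1 - (r:ℕ)%2)) / 2 = (r:ℕ)/2 := by omega
    have e2 : (2*((r:ℕ)/2) + (1 - (r:ℕ)%2)) % 2 = 1 - (r:ℕ)%2 := by omega
    have h1 := (bent_sign hm4 r.isLt c.isLt).2.1 hc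
    refine (bent_sign (r := 2*((r:ℕ)/2) + (1 - (r:ℕ)%2)) hm4 (by have := r.isLt; omega) c.isLt).1.2 ?_
    rw [e1, e2]
    exact ⟨h1.1, by omega⟩
  · intro r hc
    apply Fin.ext
    simp only [flip1_val]
    have := r.isLt
    omega
  · intro r hc
    apply Fin.ext
    simp only [flip1_val]
    have := r.isLt
    omega

lemma isSome_B {n m : ℕ} (r c : Fin n) :
    (Bfun n m r c).isSome ↔ ((r:ℕ)/2 + m - (c:ℕ)/2) % m < 3 := by
  unfold Bfun
  split <;> simp [*]

lemma zmod_key {m : ℕ} (hm : 0 < m) {i j : ℕ} (hj : j ≤ i + m) :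
    (((i + m - j) % m : ℕ) : ZMod m) = (i : ZMod m) - (j : ZMod m) := by
  have h1 : (((i + m - j) % m : ℕ) : ZMod m) = ((i + m - j : ℕ) : ZMod m) := by
    exact_mod_cast ZMod.natCast_mod (i + m - j) m
  rw [h1, Nat.cast_sub hj]
  push_cast
  simp [ZMod.natCast_self]

lemma cycB {m : ℕ} (hm4 : 4 ≤ m) : CycSKDiagonal 2 3 (Bfun (2*m) m) := by
  haveI : NeZero m := ⟨by omega⟩
  refine ⟨⟨m, rfl⟩, ?_⟩
  rw [show (2*m)/2 = m from by omega]
  refine ⟨0, 0, fun r c => ?_⟩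
  have hc : ((c:ℕ) + 0) % (2*m) = (c:ℕ) := by
    rw [Nat.add_zero, Nat.mod_eq_of_lt c.isLt]
  rw [isSome_B, hc]
  constructor
  · intro h
    refine ⟨((r:ℕ)/2 + m - (c:ℕ)/2) % m, h, ?_⟩
    rw [zero_add, zmod_key (by omega) (by have := c.isLt; omega)]
  · rintro ⟨j0, hj0, hEq⟩
    rw [zero_add, ← zmod_key (by omega) (by have := c.isLt; omega)] at hEq
    have h1 : (((r:ℕ)/2 + m - (c:ℕ)/2) % m) = (((((r:ℕ)/2 + m - (c:ℕ)/2) % m : ℕ)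
        : ZMod m)).val := (ZMod.val_cast_of_lt (Nat.mod_lt _ (by omega))).symm
    rw [h1, hEq, ZMod.val_cast_of_lt (by omega)]
    exact hj0

def Gmap (m : ℕ) (hm : 0 < m) (x : Fin m × Fin 3 × Fin 2 × Fin 2) :
    Fin (2*m) × Fin (2*m) :=
  (⟨2*(x.1:ℕ) + (x.2.2.1:ℕ), by have := x.1.isLt; have := x.2.2.1.isLt; omega⟩,
   ⟨2*(((x.1:ℕ) + m - (x.2.1:ℕ)) % m) + (x.2.2.2:ℕ), by
      have := Nat.mod_lt ((x.1:ℕ) + m - (x.2.1:ℕ)) hm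
      have := x.2.2.2.isLt; omega⟩)

lemma filled_eq_image {m : ℕ} (hm4 : 4 ≤ m) :
    Finset.univ.filter (fun p : Fin (2*m) × Fin (2*m) => (Bfun (2*m) m p.1 p.2).isSome)
      = Finset.image (Gmap m (by omega)) Finset.univ := by
  have hm : 0 < m := by omega
  ext ⟨r, c⟩
  simp only [Finset.mem_filter, Finset.mem_univ, true_and, Finset.mem_image, isSome_B]
  constructor
  · intro h
    refine ⟨⟨⟨(r:ℕ)/2, by have := r.isLt; omega⟩,
      ⟨((r:ℕ)/2 + m - (c:ℕ)/2) % m, h⟩,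
      ⟨(r:ℕ)%2, by omega⟩, ⟨(c:ℕ)%2, by omega⟩⟩, ?_⟩
    unfold Gmap
    refine Prod.ext (Fin.ext ?_) (Fin.ext ?_) <;> simp only []
    · omega
    · rw [sig_inv hm (by have := r.isLt; omega) (by have := c.isLt; omega)]
      omega
  · rintro ⟨⟨i, k, p, q⟩, hx⟩
    have h1 : 2*(i:ℕ) + (p:ℕ) = (r:ℕ) := congrArg (fun z : Fin (2*m) × Fin (2*m) => (z.1 : ℕ)) hx
    have h2 : 2*(((i:ℕ) + m - (k:ℕ)) % m) + (q:ℕ) = (c:ℕ) :=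
      congrArg (fun z : Fin (2*m) × Fin (2*m) => (z.2 : ℕ)) hx
    have hi := i.isLt
    have hk := k.isLt
    have hp := p.isLt
    have hq := q.isLt
    have e1 : (r:ℕ)/2 = (i:ℕ) := by omega
    have e2 : (c:ℕ)/2 = ((i:ℕ) + m - (k:ℕ)) % m := by omega
    rw [e1, e2, sig_inv hm hi (by omega)]
    omega

lemma Gmap_inj {m : ℕ} (hm4 : 4 ≤ m) : Function.Injective (Gmap m (by omega)) := by
  have hm : 0 < m := by omega
  rintro ⟨i1, k1, p1, q1⟩ ⟨i2, k2, p2, q2⟩ h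
  have h1 : 2*(i1:ℕ) + (p1:ℕ) = 2*(i2:ℕ) + (p2:ℕ) := congrArg (fun z => (z.1 : ℕ)) h
  have h2 : 2*(((i1:ℕ) + m - (k1:ℕ)) % m) + (q1:ℕ) = 2*(((i2:ℕ) + m - (k2:ℕ)) % m) + (q2:ℕ) :=
    congrArg (fun z => (z.2 : ℕ)) h
  have hp1 := p1.isLt; have hp2 := p2.isLt
  have hq1 := q1.isLt; have hq2 := q2.isLt
  have hi1 := i1.isLt; have hi2 := i2.isLt
  have hk1 := k1.isLt; have hk2 := k2.isLt
  have ei : (i1:ℕ) = (i2:ℕ) := by omega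
  have ew : (((i1:ℕ) + m - (k1:ℕ)) % m) = (((i2:ℕ) + m - (k2:ℕ)) % m) := by omega
  have ek : (k1:ℕ) = (k2:ℕ) := by
    have t1 := sig_inv hm hi1 (show (k1:ℕ) < m by omega)
    have t2 := sig_inv hm hi2 (show (k2:ℕ) < m by omega)
    rw [← t1, ← t2, ew, ei]
  have ep : (p1:ℕ) = (p2:ℕ) := by omega
  have eq' : (q1:ℕ) = (q2:ℕ) := by omega
  exact Prod.ext (Fin.ext ei) (Prod.ext (Fin.ext ek) (Prod.ext (Fin.ext ep) (Fin.ext eq')))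

lemma ent_mem {m i k p q : ℕ} (hm : 4 ≤ m)
    (hi : i < m) (hk : k < 3) (hp : p < 2) (hq : q < 2) :
    1 ≤ (ent m i k p q).natAbs ∧ (ent m i k p q).natAbs ≤ 12*m+3 ∧
    (ent m i k p q).natAbs ≠ 2*m+1 ∧ (ent m i k p q).natAbs ≠ 6*m+2 ∧
    (ent m i k p q).natAbs ≠ 10*m+3 := by
  have hb := ent_band hm hi hk hp hq
  have hk' : k = 0 ∨ k = 1 ∨ k = 2 := by omega
  rcases hk' with rfl|rfl|rfl <;> omega

lemma B_some {n m : ℕ} {r c : Fin n} {x : ℤ} (h : Bfun n m r c = some x) :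
    ((r:ℕ)/2 + m - (c:ℕ)/2) % m < 3 ∧
      x = ent m ((r:ℕ)/2) (((r:ℕ)/2 + m - (c:ℕ)/2) % m) ((r:ℕ)%2) ((c:ℕ)%2) := by
  unfold Bfun at h
  split_ifs at h with hc
  · exact ⟨hc, (Option.some_inj.1 h).symm⟩

lemma distinctB {m : ℕ} (hm4 : 4 ≤ m) (hm2 : m % 2 = 0) :
    DistinctAbs (Bfun (2*m) m) := by
  have hm : 0 < m := by omega
  intro r c r' c' x y hx hy habs
  obtain ⟨hc1, rfl⟩ := B_some hx
  obtain ⟨hc2, rfl⟩ := B_some hy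
  have hi1 : (r:ℕ)/2 < m := by have := r.isLt; omega
  have hi2 : (r':ℕ)/2 < m := by have := r'.isLt; omega
  have hj1 : (c:ℕ)/2 < m := by have := c.isLt; omega
  have hj2 : (c':ℕ)/2 < m := by have := c'.isLt; omega
  obtain ⟨ei, ek, ep, eq'⟩ := ent_inj hm4 hm2 hi1 hc1 (by omega) (by omega)
    hi2 hc2 (by omega) (by omega) (Int.natAbs_eq_natAbs_iff.1 habs)
  have ec : (c:ℕ)/2 = (c':ℕ)/2 := by
    rw [← sig_inv hm hi1 hj1, ← sig_inv hm hi2 hj2, ek, ei]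
  have er : (r:ℕ) = (r':ℕ) := by omega
  have ecc : (c:ℕ) = (c':ℕ) := by omega
  exact Prod.ext (Fin.ext er) (Fin.ext ecc)

theorem shiftable_cyc23diag_aux (n : ℕ) (hn : 8 ≤ n) (hn4 : n % 4 = 0) :
    ∃ B : Fin n → Fin n → Option ℤ,
      Shiftable B ∧ CycSKDiagonal 2 3 B ∧ DistinctAbs B ∧
      suppSet B =
        {a : ℕ | 1 ≤ a ∧ a ≤ 6 * n + 3 ∧ a ≠ n + 1 ∧ a ≠ 3 * n + 2 ∧ a ≠ 5 * n + 3} ∧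
      (∀ i, rowSum B i = 0) ∧ (∀ j, colSum B j = 0) := by
  obtain ⟨m, rfl⟩ : ∃ m, n = 2 * m := ⟨n / 2, by omega⟩
  have hm4 : 4 ≤ m := by omega
  have hm2 : m % 2 = 0 := by omega
  have hm : 0 < m := by omega
  classical
  refine ⟨Bfun (2*m) m, ⟨fun r => row_shift hm4 r, fun c => col_shift hm4 c⟩,
    cycB hm4, distinctB hm4 hm2, ?_, ?_, ?_⟩
  · -- support
    set F := Finset.univ.filter
      (fun p : Fin (2*m) × Fin (2*m) => (Bfun (2*m) m p.1 p.2).isSome) with hF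
    set φ : Fin (2*m) × Fin (2*m) → ℕ :=
      (fun p => ((Bfun (2*m) m p.1 p.2).getD 0).natAbs) with hφ
    set Sf := (((Finset.Icc 1 (12*m+3)).erase (2*m+1)).erase (6*m+2)).erase (10*m+3) with hSf
    have hFcard : F.card = 12*m := by
      rw [hF, filled_eq_image hm4, Finset.card_image_of_injective _ (Gmap_inj hm4)]
      simp [Fintype.card_prod]
      omega
    have hScard : Sf.card = 12*m := by
      rw [hSf, Finset.card_erase_of_mem (by simp [Finset.mem_erase, Finset.mem_Icc]; omega),
        Finset.card_erase_of_mem (by simp [Finset.mem_erase, Finset.mem_Icc]; omega),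
        Finset.card_erase_of_mem (by simp [Finset.mem_Icc]; omega), Nat.card_Icc]
      omega
    have hval : ∀ p : Fin (2*m) × Fin (2*m), p ∈ F →
        φ p = ((ent m ((p.1:ℕ)/2) (((p.1:ℕ)/2 + m - (p.2:ℕ)/2) % m)
          ((p.1:ℕ)%2) ((p.2:ℕ)%2)).natAbs) ∧ ((p.1:ℕ)/2 + m - (p.2:ℕ)/2) % m < 3 := by
      intro p hp
      rw [hF, Finset.mem_filter] at hp
      have hs := (isSome_B p.1 p.2).1 hp.2
      constructor
      · rw [hφ]
        simp only [getD_B]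
        unfold bent
        rw [if_pos hs]
      · exact hs
    have hsub : F.image φ ⊆ Sf := by
      intro a ha
      obtain ⟨p, hpF, rfl⟩ := Finset.mem_image.1 ha
      obtain ⟨hv, hs⟩ := hval p hpF
      have hmem := ent_mem (i := (p.1:ℕ)/2) (k := ((p.1:ℕ)/2 + m - (p.2:ℕ)/2) % m)
        (p := (p.1:ℕ)%2) (q := (p.2:ℕ)%2) hm4 (by have := p.1.isLt; omega) hs
        (by omega) (by omega)
      rw [hv]
      simp only [hSf, Finset.mem_erase, Finset.mem_Icc]
      omega
    have hinjOn : Set.InjOn φ F := by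
      intro p1 h1 p2 h2 he
      simp only [Finset.coe_filter, Set.mem_setOf_eq, hF] at h1 h2
      obtain ⟨x, hx⟩ := Option.isSome_iff_exists.1 h1.2
      obtain ⟨y, hy⟩ := Option.isSome_iff_exists.1 h2.2
      have ex : φ p1 = x.natAbs := by rw [hφ]; simp only [hx, Option.getD_some]
      have ey : φ p2 = y.natAbs := by rw [hφ]; simp only [hy, Option.getD_some]
      exact distinctB hm4 hm2 p1.1 p1.2 p2.1 p2.2 x y hx hy (by rw [← ex, ← ey, he])
    have himage : F.image φ = Sf := by
      apply Finset.eq_of_subset_of_card_le hsub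
      rw [hScard, Finset.card_image_of_injOn hinjOn, hFcard]
    apply Set.ext
    intro a
    simp only [suppSet, Set.mem_setOf_eq]
    constructor
    · rintro ⟨r, c, x, hx, rfl⟩
      have haS : x.natAbs ∈ Sf := by
        rw [← himage]
        apply Finset.mem_image.2
        refine ⟨(r, c), ?_, ?_⟩
        · rw [hF, Finset.mem_filter]
          exact ⟨Finset.mem_univ _, by rw [hx]; rfl⟩
        · rw [hφ]; simp only [hx, Option.getD_some]
      simp only [hSf, Finset.mem_erase, Finset.mem_Icc] at haS
      refine ⟨by omega, by omega, by omega, by omega, by omega⟩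
    · rintro ⟨ha1, ha2, ha3, ha4, ha5⟩
      have haS : a ∈ Sf := by
        simp only [hSf, Finset.mem_erase, Finset.mem_Icc]
        omega
      rw [← himage] at haS
      obtain ⟨p, hpF, hpa⟩ := Finset.mem_image.1 haS
      rw [hF, Finset.mem_filter] at hpF
      obtain ⟨x, hx⟩ := Option.isSome_iff_exists.1 hpF.2
      refine ⟨p.1, p.2, x, hx, ?_⟩
      rw [← hpa, hφ]
      simp only [hx, Option.getD_some]
  · -- row sums
    intro r
    unfold rowSum
    simp only [getD_B]
    rw [Fin.sum_univ_eq_sum_range (fun c => bent m (r:ℕ) c) (2*m)]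
    exact row_zero hm4 hm2 r.isLt
  · -- col sums
    intro c
    unfold colSum
    simp only [getD_B]
    rw [Fin.sum_univ_eq_sum_range (fun r => bent m r (c:ℕ)) (2*m)]
    exact col_zero hm4 hm2 c.isLt
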